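/- Let a, b, c be real numbers with b ≠ 0, and let a₀, a₁, a₂ : ℝ → ℝ. Define φ(x̄) = (x̄ − c(1 + a·x̄))/(b(1 + a·x̄)), t(x̄) = 1 + a·x̄, ā₂(x̄) = a₂(φ(x̄))/(b³ t(x̄)⁶), ā₁(x̄) = a₁(φ(x̄))/(b⁴ t(x̄)⁸) − 6a·a₂(φ(x̄))/(b³ t(x̄)⁷), and ā₀(x̄) = a₀(φ(x̄))/(b⁵ t(x̄)¹⁰) − 4a·a₁(φ(x̄))/(b⁴ t(x̄)⁹) + 12a²·a₂(φ(x̄))/(b³ t(x̄)⁸) on {x̄ : t(x̄) ≠ 0}. Then for every x̄ with t(x̄) ≠ 0 and a₂(φ(x̄)) ≠ 0, one has (3ā₀(x̄)ā₂(x̄) − ā₁(x̄)²)³/(27ā₂(x̄)⁸) = (3a₀a₂ − a₁²)³/(27a₂⁸) evaluated at φ(x̄). -/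

import Mathlib

/-- The point transformation of the independent variable:
`φ(x̄) = (x̄ − c(1 + a x̄)) / (b(1 + a x̄))`. -/
noncomputable def phi (a b c : ℝ) (x : ℝ) : ℝ :=
  (x - c * (1 + a * x)) / (b * (1 + a * x))

/-- The transformed coefficient `ā₂(x̄) = a₂(φ(x̄)) / (b³ (1 + a x̄)⁶)`
for the canonical form `y⁽⁵⁾ + a₂ y″ + a₁ y′ + a₀ y = 0`. -/
noncomputable def abar2 (a b c : ℝ) (a2 : ℝ → ℝ) (x : ℝ) : ℝ :=
  a2 (phi a b c x) / (b ^ 3 * (1 + a * x) ^ 6)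

/-- The transformed coefficient
`ā₁(x̄) = a₁(φ(x̄))/(b⁴ (1+a x̄)⁸) − 6a a₂(φ(x̄))/(b³ (1+a x̄)⁷)`. -/
noncomputable def abar1 (a b c : ℝ) (a1 a2 : ℝ → ℝ) (x : ℝ) : ℝ :=
  a1 (phi a b c x) / (b ^ 4 * (1 + a * x) ^ 8)
    - 6 * a * a2 (phi a b c x) / (b ^ 3 * (1 + a * x) ^ 7)

/-- The transformed coefficient
`ā₀(x̄) = a₀(φ(x̄))/(b⁵ (1+a x̄)¹⁰) − 4a a₁(φ(x̄))/(b⁴ (1+a x̄)⁹)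
          + 12a² a₂(φ(x̄))/(b³ (1+a x̄)⁸)`. -/
noncomputable def abar0 (a b c : ℝ) (a0 a1 a2 : ℝ → ℝ) (x : ℝ) : ℝ :=
  a0 (phi a b c x) / (b ^ 5 * (1 + a * x) ^ 10)
    - 4 * a * a1 (phi a b c x) / (b ^ 4 * (1 + a * x) ^ 9)
    + 12 * a ^ 2 * a2 (phi a b c x) / (b ^ 3 * (1 + a * x) ^ 8)

/-- the zeroth-order invariant `Ψ₅^{0,1} = (3a₀a₂ − a₁²)³/(27a₂⁸)` of
the canonical form `y⁽⁵⁾ + a₂ y″ + a₁ y′ + a₀ y = 0` is an absolute invariant of the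
structure invariance group. -/
theorem stmt_17 (a b c : ℝ) (hb : b ≠ 0) (a0 a1 a2 : ℝ → ℝ) :
    ∀ xb : ℝ, 1 + a * xb ≠ 0 → a2 (phi a b c xb) ≠ 0 →
      (3 * abar0 a b c a0 a1 a2 xb * abar2 a b c a2 xb
          - (abar1 a b c a1 a2 xb) ^ 2) ^ 3
        / (27 * (abar2 a b c a2 xb) ^ 8)
      = (3 * a0 (phi a b c xb) * a2 (phi a b c xb)
          - (a1 (phi a b c xb)) ^ 2) ^ 3
        / (27 * (a2 (phi a b c xb)) ^ 8) := by
  intro xb ht h2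
  unfold abar0 abar1 abar2
  set A0 := a0 (phi a b c xb)
  set A1 := a1 (phi a b c xb)
  set A2 := a2 (phi a b c xb)
  set t := 1 + a * xb
  have hnum : 3 * (A0 / (b ^ 5 * t ^ 10) - 4 * a * A1 / (b ^ 4 * t ^ 9)
        + 12 * a ^ 2 * A2 / (b ^ 3 * t ^ 8)) * (A2 / (b ^ 3 * t ^ 6))
      - (A1 / (b ^ 4 * t ^ 8) - 6 * a * A2 / (b ^ 3 * t ^ 7)) ^ 2
      = (3 * A0 * A2 - A1 ^ 2) / (b ^ 8 * t ^ 16) := by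
    field_simp
    ring
  rw [hnum, div_pow, div_pow]
  have hb3 : (b ^ 3 * t ^ 6) ≠ 0 := by positivity
  have h16 : (b ^ 8 * t ^ 16) ^ 3 ≠ 0 := by positivity
  field_simp
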